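/- Let μ be a probability measure, (e_ℓ) an orthonormal basis of L²(μ), λ ∈ ℓ², and K(x,y) = Σ_ℓ λ_ℓ e_ℓ(x)e_ℓ(y) converging in L²(μ⊗μ). If f and g are probability densities with respect to μ bounded by C, then 0 ≤ E[K(X,Y)²] ≤ C²·Σ_ℓ λ_ℓ², where X ∼ f dμ and Y ∼ g dμ are independent. -/

import Mathlib

open MeasureTheory

/-- For a kernel `K(x,y) = Σ_ℓ λ_ℓ e_ℓ(x)e_ℓ(y)` with `(e_ℓ)` orthonormal in `L²(μ)`
and `λ ∈ ℓ²`, and probability densities `f, g ≤ C` w.r.t. `μ`,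
`0 ≤ E[K(X,Y)²] ≤ C² Σ_ℓ λ_ℓ²` where `X ∼ f dμ`, `Y ∼ g dμ` independent. -/
theorem stmt_13 {X : Type*} [MeasurableSpace X] (μ : Measure X) [IsProbabilityMeasure μ]
    (e : ℕ → X → ℝ) (he : ∀ ℓ, Measurable (e ℓ))
    (lam : ℕ → ℝ) (hlam : ∀ ℓ, 0 ≤ lam ℓ) (hl2 : Summable (fun ℓ => lam ℓ ^ 2))
    (horth : ∀ i j, ∫ x, e i x * e j x ∂μ = if i = j then 1 else 0)
    (K : X → X → ℝ) (hK : ∀ x y, K x y = ∑' ℓ, lam ℓ * e ℓ x * e ℓ y)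
    -- the kernel series is square-integrably dominated on the product space
    (hdom : MemLp (fun z : X × X => ∑' ℓ, lam ℓ * |e ℓ z.1| * |e ℓ z.2|) 2 (μ.prod μ))
    (C : ℝ) (f g : X → ℝ) (hfm : Measurable f) (hgm : Measurable g)
    (hf0 : ∀ x, 0 ≤ f x) (hg0 : ∀ x, 0 ≤ g x)
    (hfC : ∀ x, f x ≤ C) (hgC : ∀ x, g x ≤ C)
    (hf1 : ∫ x, f x ∂μ = 1) (hg1 : ∫ x, g x ∂μ = 1) :
    0 ≤ ∫ z : X × X, (K z.1 z.2) ^ 2 * f z.1 * g z.2 ∂(μ.prod μ) ∧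
    ∫ z : X × X, (K z.1 z.2) ^ 2 * f z.1 * g z.2 ∂(μ.prod μ)
      ≤ C ^ 2 * ∑' ℓ, lam ℓ ^ 2 := by
  -- nonempty, hence C ≥ 0
  have hX : Nonempty X := by
    by_contra h
    rw [not_nonempty_iff] at h
    have h1 : μ Set.univ = 1 := measure_univ
    rw [Set.univ_eq_empty_iff.mpr h, measure_empty] at h1
    exact zero_ne_one h1
  have hC : 0 ≤ C := le_trans (hf0 hX.some) (hfC hX.some)
  set D : X × X → ℝ := fun z => ∑' ℓ, lam ℓ * |e ℓ z.1| * |e ℓ z.2| with hDdef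
  have hbnn : ∀ (z : X × X) ℓ, 0 ≤ lam ℓ * |e ℓ z.1| * |e ℓ z.2| := fun z ℓ =>
    mul_nonneg (mul_nonneg (hlam ℓ) (abs_nonneg _)) (abs_nonneg _)
  have habs : ∀ (z : X × X) ℓ, |lam ℓ * e ℓ z.1 * e ℓ z.2| = lam ℓ * |e ℓ z.1| * |e ℓ z.2| :=
    fun z ℓ => by rw [abs_mul, abs_mul, abs_of_nonneg (hlam ℓ)]
  have hDnn : ∀ z, 0 ≤ D z := fun z => tsum_nonneg (hbnn z)
  -- the set where the series converges
  set A : Set (X × X) := {z | Summable fun ℓ => lam ℓ * e ℓ z.1 * e ℓ z.2} with hAdef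
  have hmemA : ∀ z : X × X, z ∈ A ↔ Summable fun ℓ => lam ℓ * e ℓ z.1 * e ℓ z.2 := fun z => Iff.rfl
  have hA : MeasurableSet A := by
    have hφ : Measurable fun z : X × X =>
        ∑' ℓ, ENNReal.ofReal (lam ℓ * |e ℓ z.1| * |e ℓ z.2|) :=
      Measurable.ennreal_tsum fun ℓ => ENNReal.measurable_ofReal.comp
        ((((he ℓ).comp measurable_fst).abs.const_mul (lam ℓ)).mul
          ((he ℓ).comp measurable_snd).abs)
    have key : ∀ z : X × X, z ∈ A ↔
        (∑' ℓ, ENNReal.ofReal (lam ℓ * |e ℓ z.1| * |e ℓ z.2|)) ≠ ⊤ := by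
      intro z
      rw [hmemA, ← summable_abs_iff]
      rw [show (fun ℓ => |lam ℓ * e ℓ z.1 * e ℓ z.2|)
          = fun ℓ => lam ℓ * |e ℓ z.1| * |e ℓ z.2| from funext (habs z)]
      constructor
      · intro hs
        rw [← ENNReal.ofReal_tsum_of_nonneg (hbnn z) hs]
        exact ENNReal.ofReal_ne_top
      · intro h
        have h1 := ENNReal.summable_toNNReal_of_tsum_ne_top h
        have h2 := NNReal.summable_coe.mpr h1
        refine h2.congr fun ℓ => ?_
        simp only [Function.comp_apply, ENNReal.ofReal, ENNReal.toNNReal_coe]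
        exact Real.coe_toNNReal _ (hbnn z ℓ)
    have : A = (fun z : X × X =>
        ∑' ℓ, ENNReal.ofReal (lam ℓ * |e ℓ z.1| * |e ℓ z.2|)) ⁻¹' {⊤}ᶜ :=
      Set.ext fun z => by simpa using key z
    rw [this]
    exact hφ (measurableSet_singleton ⊤).compl
  -- partial sums
  set S : ℕ → X × X → ℝ := fun n z => ∑ i ∈ Finset.range n, lam i * e i z.1 * e i z.2
    with hSdef
  have hSm : ∀ n, Measurable (S n) := fun n =>
    Finset.measurable_sum _ fun i _ =>
      ((measurable_const.mul ((he i).comp measurable_fst)).mul ((he i).comp measurable_snd))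
  -- |S n z| ≤ D z on A
  have hSD : ∀ z ∈ A, ∀ n, |S n z| ≤ D z := by
    intro z hz n
    calc |S n z| ≤ ∑ i ∈ Finset.range n, |lam i * e i z.1 * e i z.2| :=
          Finset.abs_sum_le_sum_abs _ _
      _ ≤ ∑' i, |lam i * e i z.1 * e i z.2| :=
          Summable.sum_le_tsum _ (fun i _ => abs_nonneg _) (summable_abs_iff.mpr hz)
      _ = D z := tsum_congr (habs z)
  -- pointwise convergence of indicator partial sums to K
  have hconv : ∀ z : X × X,
      Filter.Tendsto (fun n => A.indicator (S n) z) Filter.atTop (nhds (K z.1 z.2)) := by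
    intro z
    by_cases hz : z ∈ A
    · simp only [Set.indicator_of_mem hz]
      rw [hK]
      exact ((hmemA z).mp hz).hasSum.tendsto_sum_nat
    · simp only [Set.indicator_of_notMem hz]
      rw [hK, tsum_eq_zero_of_not_summable hz]
      exact tendsto_const_nhds
  have hKm : Measurable (fun z : X × X => K z.1 z.2) :=
    measurable_of_tendsto_metrizable (fun n => (hSm n).indicator hA)
      (tendsto_pi_nhds.mpr hconv)
  -- |K| ≤ D everywhere
  have hKD : ∀ z : X × X, |K z.1 z.2| ≤ D z := by
    intro z
    by_cases hz : z ∈ A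
    · rw [hK]
      calc |∑' ℓ, lam ℓ * e ℓ z.1 * e ℓ z.2| ≤ ∑' ℓ, |lam ℓ * e ℓ z.1 * e ℓ z.2| := by
            have hs : Summable fun ℓ => |lam ℓ * e ℓ z.1 * e ℓ z.2| :=
              summable_abs_iff.mpr ((hmemA z).mp hz)
            have := norm_tsum_le_tsum_norm (f := fun ℓ => lam ℓ * e ℓ z.1 * e ℓ z.2)
              (hs.congr fun ℓ => (Real.norm_eq_abs _).symm)
            simpa only [Real.norm_eq_abs] using this
        _ = D z := tsum_congr (habs z)
    · rw [hK, tsum_eq_zero_of_not_summable hz]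
      simpa using hDnn z
  -- integrability of e i * e j
  have heI : ∀ i, Integrable (fun x => e i x * e i x) μ := by
    intro i
    by_contra h
    have h0 := horth i i
    rw [integral_undef h] at h0
    simp at h0
  have heL2 : ∀ i, MemLp (e i) 2 μ := by
    intro i
    rw [memLp_two_iff_integrable_sq (he i).aestronglyMeasurable]
    simpa [sq] using heI i
  have hee : ∀ i j, Integrable (fun x => e i x * e j x) μ := by
    intro i j
    refine Integrable.mono' (((heL2 i).integrable_sq.add (heL2 j).integrable_sq).div_const 2)
      ((he i).mul (he j)).aestronglyMeasurable
      (Filter.Eventually.of_forall fun x => ?_)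
    rw [Real.norm_eq_abs, abs_mul]
    simp only [Pi.add_apply]
    nlinarith [sq_nonneg (|e i x| - |e j x|), abs_nonneg (e i x), abs_nonneg (e j x),
      sq_abs (e i x), sq_abs (e j x)]
  have htermint : ∀ i j, Integrable
      (fun z : X × X => (lam i * lam j) * ((e i z.1 * e j z.1) * (e i z.2 * e j z.2)))
      (μ.prod μ) := fun i j => ((hee i j).mul_prod (hee i j)).const_mul _
  have hexp : ∀ n (z : X × X), (S n z) ^ 2 = ∑ i ∈ Finset.range n, ∑ j ∈ Finset.range n,
      (lam i * lam j) * ((e i z.1 * e j z.1) * (e i z.2 * e j z.2)) := by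
    intro n z
    rw [hSdef, sq, Finset.sum_mul_sum]
    exact Finset.sum_congr rfl fun i _ => Finset.sum_congr rfl fun j _ => by ring
  have hSint : ∀ n, Integrable (fun z => (S n z) ^ 2) (μ.prod μ) := by
    intro n
    simp only [hexp]
    exact integrable_finset_sum _ fun i _ => integrable_finset_sum _ fun j _ => htermint i j
  have hSsq : ∀ n, ∫ z, (S n z) ^ 2 ∂(μ.prod μ) = ∑ i ∈ Finset.range n, lam i ^ 2 := by
    intro n
    simp only [hexp]
    rw [integral_finset_sum _ fun i _ => integrable_finset_sum _ fun j _ => htermint i j]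
    have step : ∀ i ∈ Finset.range n,
        (∫ z : X × X, ∑ j ∈ Finset.range n,
          (lam i * lam j) * ((e i z.1 * e j z.1) * (e i z.2 * e j z.2)) ∂(μ.prod μ))
        = lam i ^ 2 := by
      intro i hi
      rw [integral_finset_sum _ fun j _ => htermint i j]
      have term : ∀ j ∈ Finset.range n,
          (∫ z : X × X, (lam i * lam j) * ((e i z.1 * e j z.1) * (e i z.2 * e j z.2))
            ∂(μ.prod μ)) = if i = j then lam i ^ 2 else 0 := by
        intro j _
        rw [integral_const_mul, integral_prod_mul (f := fun x => e i x * e j x)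
          (g := fun x => e i x * e j x), horth i j]
        by_cases hij : i = j <;> simp [hij, sq]
      rw [Finset.sum_congr rfl term, Finset.sum_ite_eq (Finset.range n) i fun _ => lam i ^ 2]
      simp [hi]
    rw [Finset.sum_congr rfl step]
  -- integrable dominating function
  have hD2int : Integrable (fun z => D z ^ 2) (μ.prod μ) := hdom.integrable_sq
  -- dominated convergence
  have hlimDC : Filter.Tendsto (fun n => ∫ z, (A.indicator (S n) z) ^ 2 ∂(μ.prod μ))
      Filter.atTop (nhds (∫ z : X × X, K z.1 z.2 ^ 2 ∂(μ.prod μ))) := by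
    refine tendsto_integral_of_dominated_convergence (fun z => D z ^ 2)
      (fun n => (((hSm n).indicator hA).pow_const 2).aestronglyMeasurable)
      hD2int
      (fun n => Filter.Eventually.of_forall fun z => ?_)
      (Filter.Eventually.of_forall fun z => (hconv z).pow 2)
    rw [Real.norm_eq_abs, abs_of_nonneg (sq_nonneg _)]
    by_cases hz : z ∈ A
    · rw [Set.indicator_of_mem hz, ← sq_abs]
      exact pow_le_pow_left₀ (abs_nonneg _) (hSD z hz n) 2
    · rw [Set.indicator_of_notMem hz]
      simpa using sq_nonneg (D z)
  have hKsum : ∫ z : X × X, K z.1 z.2 ^ 2 ∂(μ.prod μ) ≤ ∑' ℓ, lam ℓ ^ 2 := by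
    refine le_of_tendsto hlimDC (Filter.Eventually.of_forall fun n => ?_)
    calc ∫ z, (A.indicator (S n) z) ^ 2 ∂(μ.prod μ)
        ≤ ∫ z, (S n z) ^ 2 ∂(μ.prod μ) := by
          refine integral_mono_of_nonneg (Filter.Eventually.of_forall fun z => sq_nonneg _)
            (hSint n) (Filter.Eventually.of_forall fun z => ?_)
          by_cases hz : z ∈ A
          · simp [Set.indicator_of_mem hz]
          · simp [Set.indicator_of_notMem hz, sq_nonneg]
      _ = ∑ i ∈ Finset.range n, lam i ^ 2 := hSsq n
      _ ≤ ∑' ℓ, lam ℓ ^ 2 := Summable.sum_le_tsum _ (fun i _ => sq_nonneg _) hl2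
  -- integrability of K²
  have hK2int : Integrable (fun z : X × X => K z.1 z.2 ^ 2) (μ.prod μ) := by
    refine hD2int.mono' ((hKm.pow_const 2)).aestronglyMeasurable
      (Filter.Eventually.of_forall fun z => ?_)
    rw [Real.norm_eq_abs, abs_of_nonneg (sq_nonneg _), ← sq_abs]
    exact pow_le_pow_left₀ (abs_nonneg _) (hKD z) 2
  have hpt : ∀ z : X × X, K z.1 z.2 ^ 2 * f z.1 * g z.2 ≤ C ^ 2 * K z.1 z.2 ^ 2 := by
    intro z
    have h1 : f z.1 * g z.2 ≤ C * C := mul_le_mul (hfC _) (hgC _) (hg0 _) hC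
    nlinarith [sq_nonneg (K z.1 z.2), mul_nonneg (hf0 z.1) (hg0 z.2)]
  constructor
  · exact integral_nonneg fun z => mul_nonneg (mul_nonneg (sq_nonneg _) (hf0 _)) (hg0 _)
  · calc ∫ z : X × X, K z.1 z.2 ^ 2 * f z.1 * g z.2 ∂(μ.prod μ)
        ≤ ∫ z : X × X, C ^ 2 * K z.1 z.2 ^ 2 ∂(μ.prod μ) := by
          refine integral_mono_of_nonneg
            (Filter.Eventually.of_forall fun z =>
              mul_nonneg (mul_nonneg (sq_nonneg _) (hf0 _)) (hg0 _))
            (hK2int.const_mul _)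
            (Filter.Eventually.of_forall hpt)
      _ = C ^ 2 * ∫ z : X × X, K z.1 z.2 ^ 2 ∂(μ.prod μ) := integral_const_mul _ _
      _ ≤ C ^ 2 * ∑' ℓ, lam ℓ ^ 2 := mul_le_mul_of_nonneg_left hKsum (sq_nonneg C)
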